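/- Let P(r,s|a,b) be a nonsignaling box with V(P) nonempty, and define D(P) = sup over probability distributions ρ(a) on {1,…,A} of inf over ρ(r,𝐬|a)∈V(P) of the mutual information I(A;𝐒) of the channel ρ(𝐬|a)=Σ_r ρ(r,𝐬|a) with input ρ(a). Then for any real Bell coefficients B(r,s;a,b) and any η(a) with η(a) > 0 for all a, D(P) ≥ γ^{−1} Σ_{r,s,a,b} P(r,s|a,b)B(r,s;a,b) + K_η, where γ = Σ_a η(a), ρ(a) = η(a)/γ, and K_η = −log max_{𝐬∈𝓢^B} Σ_a ρ(a) max_r exp( η(a)^{−1} Σ_b B(r,s_b;a,b) ). -/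

import Mathlib

open scoped BigOperators

/-- A probability distribution on a finite type. -/
def IsDist {α : Type*} [Fintype α] (q : α → ℝ) : Prop :=
  (∀ x, 0 ≤ q x) ∧ ∑ x, q x = 1

/-- Mutual information of the channel `W` with input distribution `q`
(convention `0 · log 0 = 0`, automatic since `Real.log 0 = 0`). -/
noncomputable def mutInfo {X Y : Type*} [Fintype X] [Fintype Y]
    (W : Y → X → ℝ) (q : X → ℝ) : ℝ :=
  ∑ y, ∑ x, W y x * q x * Real.log (W y x / ∑ x', W y x' * q x')

/-- A nonsignaling box `P(r,s|a,b)`. -/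
def IsNSBox {R S : Type*} [Fintype R] [Fintype S] {A B : ℕ}
    (P : R → S → Fin A → Fin B → ℝ) : Prop :=
  (∀ r s a b, 0 ≤ P r s a b) ∧
  (∀ a b, ∑ r, ∑ s, P r s a b = 1) ∧
  (∀ a r b b', ∑ s, P r s a b = ∑ s, P r s a b') ∧
  (∀ b s a a', ∑ r, P r s a b = ∑ r, P r s a' b)

/-- Membership in the set `V(P)`: `ρ(r,𝐬|a)` is a conditional probability over
`r` and sequences `𝐬 ∈ 𝓢^B` whose marginal on `(r, s_b)` is `P(r,s|a,b)`. -/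
def MemV {R S : Type*} [Fintype R] [Fintype S] [DecidableEq S] {A B : ℕ}
    (P : R → S → Fin A → Fin B → ℝ)
    (ρ : R → (Fin B → S) → Fin A → ℝ) : Prop :=
  (∀ r ss a, 0 ≤ ρ r ss a) ∧
  (∀ a, ∑ r, ∑ ss : Fin B → S, ρ r ss a = 1) ∧
  (∀ a b r s, ∑ ss : Fin B → S, (if ss b = s then ρ r ss a else 0) = P r s a b)


/-- `D(P) = sup_{ρ(a)} inf_{ρ(r,𝐬|a) ∈ V(P)} I(A;𝐒)`. -/
noncomputable def DP {R S : Type*} [Fintype R] [Fintype S] [DecidableEq S]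
    {A B : ℕ} (P : R → S → Fin A → Fin B → ℝ) : ℝ :=
  sSup { d : ℝ | ∃ q : Fin A → ℝ, IsDist q ∧
    d = sInf { x : ℝ | ∃ ρ, MemV P ρ ∧
          x = mutInfo (fun ss a => ∑ r, ρ r ss a) q } }

lemma mutInfo_le_card {X Y : Type*} [Fintype X] [Fintype Y]
    (W : Y → X → ℝ) (q : X → ℝ) (hq0 : ∀ x, 0 ≤ q x)
    (hW0 : ∀ y x, 0 ≤ W y x) (hW1 : ∀ x, ∑ y, W y x = 1) :
    mutInfo W q ≤ (Fintype.card X : ℝ) := by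
  rw [mutInfo, Finset.sum_comm]
  have key : ∀ x : X, ∑ y, W y x * q x * Real.log (W y x / ∑ x', W y x' * q x') ≤ 1 := by
    intro x
    rcases eq_or_lt_of_le (hq0 x) with h0 | hpos
    · simp [← h0]
    · have hstep : ∀ y : Y, W y x * q x * Real.log (W y x / ∑ x', W y x' * q x')
          ≤ W y x * q x * Real.log (q x)⁻¹ := by
        intro y
        rcases eq_or_lt_of_le (hW0 y x) with hw0 | hw
        · simp [← hw0]
        · have hp : W y x * q x ≤ ∑ x', W y x' * q x' :=
            Finset.single_le_sum (fun x' _ => mul_nonneg (hW0 y x') (hq0 x')) (Finset.mem_univ x)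
          have hppos : 0 < ∑ x', W y x' * q x' := lt_of_lt_of_le (mul_pos hw hpos) hp
          have hle : W y x / (∑ x', W y x' * q x') ≤ (q x)⁻¹ := by
            rw [inv_eq_one_div, div_le_div_iff₀ hppos hpos]
            linarith
          exact mul_le_mul_of_nonneg_left
            (Real.log_le_log (div_pos hw hppos) hle)
            (mul_nonneg (le_of_lt hw) (le_of_lt hpos))
      calc ∑ y, W y x * q x * Real.log (W y x / ∑ x', W y x' * q x')
          ≤ ∑ y, W y x * q x * Real.log (q x)⁻¹ := Finset.sum_le_sum (fun y _ => hstep y)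
        _ = q x * Real.log (q x)⁻¹ := by
            simp only [mul_assoc]
            rw [← Finset.sum_mul, hW1 x, one_mul]
        _ ≤ q x * ((q x)⁻¹ - 1) := by
            exact mul_le_mul_of_nonneg_left
              (Real.log_le_sub_one_of_pos (inv_pos.mpr hpos)) (le_of_lt hpos)
        _ = 1 - q x := by field_simp
        _ ≤ 1 := by linarith
  calc ∑ x : X, ∑ y, W y x * q x * Real.log (W y x / ∑ x', W y x' * q x')
      ≤ ∑ _x : X, (1:ℝ) := Finset.sum_le_sum (fun x _ => key x)
    _ = (Fintype.card X : ℝ) := by simp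

lemma core_DV {X Y : Type*} [Fintype X] [Fintype Y]
    (W : Y → X → ℝ) (q : X → ℝ) (M : X → Y → ℝ) (Z : ℝ)
    (hq0 : ∀ x, 0 < q x) (hqsum : ∑ x, q x = 1)
    (hW0 : ∀ y x, 0 ≤ W y x) (hW1 : ∀ x, ∑ y, W y x = 1)
    (hMpos : ∀ x y, 0 < M x y)
    (hZle : ∀ y, ∑ x, q x * M x y ≤ Z) (hZpos : 0 < Z) :
    (∑ y, ∑ x, W y x * q x * Real.log (M x y)) - Real.log Z ≤ mutInfo W q := by
  classical
  rw [mutInfo]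
  set p : Y → ℝ := fun y => ∑ x', W y x' * q x' with hp
  have hp0 : ∀ y, 0 ≤ p y := fun y =>
    Finset.sum_nonneg (fun x _ => mul_nonneg (hW0 y x) (hq0 x).le)
  have hpsum : ∑ y, p y = 1 := by
    simp only [hp]
    rw [Finset.sum_comm]
    calc ∑ x, ∑ y, W y x * q x = ∑ x, (∑ y, W y x) * q x := by
          simp only [Finset.sum_mul]
      _ = 1 := by simp only [hW1, one_mul]; exact hqsum
  set τ : X → Y → ℝ := fun x y => q x * p y * M x y / Z with hτ
  have hτ0 : ∀ x y, 0 ≤ τ x y := fun x y => by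
    simp only [hτ]
    exact div_nonneg (mul_nonneg (mul_nonneg (hq0 x).le (hp0 y)) (hMpos x y).le) hZpos.le
  have hterm : ∀ y x, W y x * q x - τ x y
      ≤ W y x * q x * Real.log (W y x / p y)
        - W y x * q x * Real.log (M x y) + W y x * q x * Real.log Z := by
    intro y x
    rcases eq_or_lt_of_le (hW0 y x) with hw | hw
    · simp only [← hw, zero_mul, zero_sub, sub_zero, zero_add]
      linarith [hτ0 x y]
    · have hμ : 0 < W y x * q x := mul_pos hw (hq0 x)
      have hpy : 0 < p y := lt_of_lt_of_le hμ
        (Finset.single_le_sum (fun x' _ => mul_nonneg (hW0 y x') (hq0 x').le)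
          (Finset.mem_univ x))
      have hτpos : 0 < τ x y := by
        simp only [hτ]
        exact div_pos (mul_pos (mul_pos (hq0 x) hpy) (hMpos x y)) hZpos
      have hlog : Real.log ((W y x * q x) / τ x y)
          = Real.log (W y x / p y) - Real.log (M x y) + Real.log Z := by
        simp only [hτ]
        rw [Real.log_div hμ.ne' (div_pos (mul_pos (mul_pos (hq0 x) hpy) (hMpos x y)) hZpos).ne',
            Real.log_mul hw.ne' (hq0 x).ne',
            Real.log_div (mul_pos (mul_pos (hq0 x) hpy) (hMpos x y)).ne' hZpos.ne',
            Real.log_mul (mul_pos (hq0 x) hpy).ne' (hMpos x y).ne',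
            Real.log_mul (hq0 x).ne' hpy.ne', Real.log_div hw.ne' hpy.ne']
        ring
      have h1 : 1 - ((W y x * q x) / τ x y)⁻¹ ≤ Real.log ((W y x * q x) / τ x y) :=
        Real.one_sub_inv_le_log_of_pos (div_pos hμ hτpos)
      have h2 : ((W y x * q x) / τ x y)⁻¹ = τ x y / (W y x * q x) := by
        rw [inv_div]
      rw [h2] at h1
      have h3 := mul_le_mul_of_nonneg_left h1 hμ.le
      rw [mul_sub, mul_one, mul_div_cancel₀ _ hμ.ne'] at h3
      calc W y x * q x - τ x y ≤ W y x * q x * Real.log ((W y x * q x) / τ x y) := h3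
        _ = _ := by rw [hlog]; ring
  have hsum : ∑ y, ∑ x, (W y x * q x - τ x y)
      ≤ ∑ y, ∑ x, (W y x * q x * Real.log (W y x / p y)
          - W y x * q x * Real.log (M x y) + W y x * q x * Real.log Z) :=
    Finset.sum_le_sum fun y _ => Finset.sum_le_sum fun x _ => hterm y x
  have hμsum : ∑ y, ∑ x, W y x * q x = 1 := by
    have : ∀ y, ∑ x, W y x * q x = p y := fun y => by simp only [hp]
    simp only [this]; exact hpsum
  have hτsum : ∑ y, ∑ x, τ x y ≤ 1 := by
    have hyle : ∀ y, ∑ x, τ x y ≤ p y := by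
      intro y
      have h1 : ∑ x, τ x y = (∑ x, q x * M x y) * (p y / Z) := by
        rw [Finset.sum_mul]
        exact Finset.sum_congr rfl fun x _ => by simp only [hτ]; ring
      rw [h1]
      calc (∑ x, q x * M x y) * (p y / Z) ≤ Z * (p y / Z) :=
            mul_le_mul_of_nonneg_right (hZle y) (div_nonneg (hp0 y) hZpos.le)
        _ = p y := by field_simp
    calc ∑ y, ∑ x, τ x y ≤ ∑ y, p y := Finset.sum_le_sum fun y _ => hyle y
      _ = 1 := hpsum
  have eL : ∑ y, ∑ x, (W y x * q x - τ x y) = 1 - ∑ y, ∑ x, τ x y := by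
    simp only [Finset.sum_sub_distrib]
    rw [hμsum]
  have eR : ∑ y, ∑ x, (W y x * q x * Real.log (W y x / p y)
        - W y x * q x * Real.log (M x y) + W y x * q x * Real.log Z)
      = (∑ y, ∑ x, W y x * q x * Real.log (W y x / p y))
        - (∑ y, ∑ x, W y x * q x * Real.log (M x y)) + Real.log Z := by
    simp only [Finset.sum_add_distrib, Finset.sum_sub_distrib]
    congr 1
    calc ∑ y, ∑ x, W y x * q x * Real.log Z
        = (∑ y, ∑ x, W y x * q x) * Real.log Z := by
          rw [Finset.sum_mul]
          exact Finset.sum_congr rfl fun y _ => by rw [Finset.sum_mul]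
      _ = Real.log Z := by rw [hμsum, one_mul]
  rw [eL, eR] at hsum
  linarith

/-- For every Bell coefficients `B(r,s;a,b)` and strictly positive `η(a)`,
`D(P) ≥ γ⁻¹ Σ_{r,s,a,b} P(r,s|a,b) B(r,s;a,b) + K_η`, with `γ = Σ_a η(a)`,
`ρ(a) = η(a)/γ` and
`K_η = −log max_𝐬 Σ_a ρ(a) max_r exp(η(a)⁻¹ Σ_b B(r,s_b;a,b))`. -/
theorem stmt9 {R S : Type*} [Fintype R] [Fintype S] [DecidableEq S]
    [Nonempty R] [Nonempty S] {A B : ℕ}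
    (P : R → S → Fin A → Fin B → ℝ) (hP : IsNSBox P)
    (hne : ∃ ρ, MemV P ρ)
    (Bc : R → S → Fin A → Fin B → ℝ)
    (η : Fin A → ℝ) (hη : ∀ a, 0 < η a) :
    (∑ a, η a)⁻¹ * (∑ r, ∑ s, ∑ a, ∑ b, P r s a b * Bc r s a b)
      + (-Real.log (⨆ ss : Fin B → S,
          ∑ a, (η a / ∑ a', η a') *
            ⨆ r, Real.exp ((η a)⁻¹ * ∑ b, Bc r (ss b) a b)))
    ≤ DP P := by
  classical
  obtain ⟨ρ₀, hρ₀⟩ := hne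
  rcases Nat.eq_zero_or_pos A with hA0 | hApos
  · subst hA0
    have hset : { d : ℝ | ∃ q : Fin 0 → ℝ, IsDist q ∧
        d = sInf { x : ℝ | ∃ ρ, MemV P ρ ∧
          x = mutInfo (fun ss a => ∑ r, ρ r ss a) q } } = ∅ := by
      ext d
      simp only [Set.mem_setOf_eq, Set.mem_empty_iff_false, iff_false, not_exists]
      rintro q ⟨⟨-, hq1⟩, -⟩
      simp at hq1
    rw [DP, hset, Real.sSup_empty]
    simp
  haveI : Nonempty (Fin A) := Fin.pos_iff_nonempty.mp hApos
  set γ : ℝ := ∑ a, η a with hγdef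
  have hγ : (0:ℝ) < γ := Finset.sum_pos (fun a _ => hη a) Finset.univ_nonempty
  -- positivity of the suprema over r
  have hMbdd : ∀ (a : Fin A) (ss : Fin B → S),
      BddAbove (Set.range fun r : R => Real.exp ((η a)⁻¹ * ∑ b, Bc r (ss b) a b)) :=
    fun a ss => (Set.finite_range _).bddAbove
  have hMpos : ∀ (a : Fin A) (ss : Fin B → S),
      (0:ℝ) < ⨆ r, Real.exp ((η a)⁻¹ * ∑ b, Bc r (ss b) a b) :=
    fun a ss => lt_of_lt_of_le (Real.exp_pos _) (le_ciSup (hMbdd a ss) (Classical.arbitrary R))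
  set Z : ℝ := ⨆ ss : Fin B → S, ∑ a, η a / γ * ⨆ r, Real.exp ((η a)⁻¹ * ∑ b, Bc r (ss b) a b)
    with hZdef
  have hZle : ∀ ss : Fin B → S,
      (∑ a, η a / γ * ⨆ r, Real.exp ((η a)⁻¹ * ∑ b, Bc r (ss b) a b)) ≤ Z := by
    intro ss
    rw [hZdef]
    exact le_ciSup (f := fun ss : Fin B → S =>
      ∑ a, η a / γ * ⨆ r, Real.exp ((η a)⁻¹ * ∑ b, Bc r (ss b) a b))
      ((Set.finite_range _).bddAbove) ss
  have hZpos : (0:ℝ) < Z :=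
    lt_of_lt_of_le
      (Finset.sum_pos (fun a _ => mul_pos (div_pos (hη a) hγ) (hMpos a (Classical.arbitrary _)))
        Finset.univ_nonempty)
      (hZle (Classical.arbitrary _))
  -- key bound for every element of V(P)
  have hkey : ∀ ρ : R → (Fin B → S) → Fin A → ℝ, MemV P ρ →
      γ⁻¹ * (∑ r, ∑ s, ∑ a, ∑ b, P r s a b * Bc r s a b) + (-Real.log Z)
        ≤ mutInfo (fun ss a => ∑ r, ρ r ss a) (fun a => η a / γ) := by
    intro ρ hρ
    have hW1 : ∀ a, ∑ ss : Fin B → S, ∑ r, ρ r ss a = 1 := by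
      intro a; rw [Finset.sum_comm]; exact hρ.2.1 a
    -- Bell rearrangement
    have hre : ∑ r, ∑ s, ∑ a, ∑ b, P r s a b * Bc r s a b
        = ∑ ss : Fin B → S, ∑ a, ∑ r, ρ r ss a * ∑ b, Bc r (ss b) a b := by
      have h1 : ∀ (r : R) (a : Fin A) (b : Fin B),
          ∑ s, P r s a b * Bc r s a b = ∑ ss : Fin B → S, ρ r ss a * Bc r (ss b) a b := by
        intro r a b
        calc ∑ s, P r s a b * Bc r s a b
            = ∑ s, (∑ ss : Fin B → S, if ss b = s then ρ r ss a else 0) * Bc r s a b := by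
              simp only [hρ.2.2]
          _ = ∑ s, ∑ ss : Fin B → S, (if ss b = s then ρ r ss a * Bc r s a b else 0) := by
              simp only [Finset.sum_mul, ite_mul, zero_mul]
          _ = ∑ ss : Fin B → S, ∑ s, (if ss b = s then ρ r ss a * Bc r s a b else 0) :=
              Finset.sum_comm
          _ = ∑ ss : Fin B → S, ρ r ss a * Bc r (ss b) a b := by
              refine Finset.sum_congr rfl fun ss _ => ?_
              rw [Finset.sum_ite_eq]
              simp
      calc ∑ r, ∑ s, ∑ a, ∑ b, P r s a b * Bc r s a b
          = ∑ r, ∑ a, ∑ b, ∑ s, P r s a b * Bc r s a b := by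
            refine Finset.sum_congr rfl fun r _ => ?_
            rw [Finset.sum_comm]
            exact Finset.sum_congr rfl fun a _ => Finset.sum_comm
        _ = ∑ r, ∑ a, ∑ b, ∑ ss : Fin B → S, ρ r ss a * Bc r (ss b) a b := by
            simp only [h1]
        _ = ∑ r, ∑ a, ∑ ss : Fin B → S, ρ r ss a * ∑ b, Bc r (ss b) a b := by
            refine Finset.sum_congr rfl fun r _ => Finset.sum_congr rfl fun a _ => ?_
            rw [Finset.sum_comm]
            exact Finset.sum_congr rfl fun ss _ => (Finset.mul_sum _ _ _).symm
        _ = ∑ a, ∑ r, ∑ ss : Fin B → S, ρ r ss a * ∑ b, Bc r (ss b) a b :=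
            Finset.sum_comm
        _ = ∑ a, ∑ ss : Fin B → S, ∑ r, ρ r ss a * ∑ b, Bc r (ss b) a b :=
            Finset.sum_congr rfl fun a _ => Finset.sum_comm
        _ = ∑ ss : Fin B → S, ∑ a, ∑ r, ρ r ss a * ∑ b, Bc r (ss b) a b :=
            Finset.sum_comm
    -- Bell value bounded by the log-moment term
    have hBell : γ⁻¹ * (∑ r, ∑ s, ∑ a, ∑ b, P r s a b * Bc r s a b)
        ≤ ∑ ss : Fin B → S, ∑ a, (∑ r, ρ r ss a) * (η a / γ) *
            Real.log (⨆ r, Real.exp ((η a)⁻¹ * ∑ b, Bc r (ss b) a b)) := by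
      rw [hre, Finset.mul_sum]
      refine Finset.sum_le_sum fun ss _ => ?_
      rw [Finset.mul_sum]
      refine Finset.sum_le_sum fun a _ => ?_
      rw [Finset.mul_sum]
      have hlogM : ∀ r : R, (η a)⁻¹ * ∑ b, Bc r (ss b) a b
          ≤ Real.log (⨆ r', Real.exp ((η a)⁻¹ * ∑ b, Bc r' (ss b) a b)) := by
        intro r
        rw [Real.le_log_iff_exp_le (hMpos a ss)]
        exact le_ciSup (hMbdd a ss) r
      calc ∑ r, γ⁻¹ * (ρ r ss a * ∑ b, Bc r (ss b) a b)
          ≤ ∑ r, ρ r ss a * (η a / γ) *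
              Real.log (⨆ r', Real.exp ((η a)⁻¹ * ∑ b, Bc r' (ss b) a b)) := by
            refine Finset.sum_le_sum fun r _ => ?_
            have hcan : (η a / γ) * (η a)⁻¹ = γ⁻¹ := by
              field_simp [(hη a).ne', hγ.ne']
            have heq : γ⁻¹ * (ρ r ss a * ∑ b, Bc r (ss b) a b)
                = ρ r ss a * (η a / γ) * ((η a)⁻¹ * ∑ b, Bc r (ss b) a b) := by
              rw [← hcan]; ring
            rw [heq]
            exact mul_le_mul_of_nonneg_left (hlogM r)
              (mul_nonneg (hρ.1 r ss a) (div_nonneg (hη a).le hγ.le))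
        _ = (∑ r, ρ r ss a) * (η a / γ) *
              Real.log (⨆ r', Real.exp ((η a)⁻¹ * ∑ b, Bc r' (ss b) a b)) := by
            rw [Finset.sum_mul, Finset.sum_mul]
    -- apply core_DV
    have hDV := core_DV (fun ss a => ∑ r, ρ r ss a) (fun a => η a / γ)
      (fun a ss => ⨆ r, Real.exp ((η a)⁻¹ * ∑ b, Bc r (ss b) a b)) Z
      (fun a => div_pos (hη a) hγ)
      (by rw [← Finset.sum_div]; exact div_self hγ.ne')
      (fun ss a => Finset.sum_nonneg fun r _ => hρ.1 r ss a)
      hW1 (fun a ss => hMpos a ss) hZle hZpos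
    calc γ⁻¹ * (∑ r, ∑ s, ∑ a, ∑ b, P r s a b * Bc r s a b) + (-Real.log Z)
        ≤ (∑ ss : Fin B → S, ∑ a, (∑ r, ρ r ss a) * (η a / γ) *
            Real.log (⨆ r, Real.exp ((η a)⁻¹ * ∑ b, Bc r (ss b) a b))) + (-Real.log Z) :=
          add_le_add_left hBell _
      _ ≤ mutInfo (fun ss a => ∑ r, ρ r ss a) (fun a => η a / γ) := by
          rw [← sub_eq_add_neg]
          exact hDV
  -- assemble DP
  have hq_dist : IsDist (fun a : Fin A => η a / γ) :=
    ⟨fun a => (div_pos (hη a) hγ).le, by rw [← Finset.sum_div]; exact div_self hγ.ne'⟩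
  have hXne : { x : ℝ | ∃ ρ, MemV P ρ ∧
      x = mutInfo (fun ss a => ∑ r, ρ r ss a) (fun a : Fin A => η a / γ) }.Nonempty :=
    ⟨_, ρ₀, hρ₀, rfl⟩
  have h2 : γ⁻¹ * (∑ r, ∑ s, ∑ a, ∑ b, P r s a b * Bc r s a b) + (-Real.log Z)
      ≤ sInf { x : ℝ | ∃ ρ, MemV P ρ ∧
          x = mutInfo (fun ss a => ∑ r, ρ r ss a) (fun a : Fin A => η a / γ) } := by
    refine le_csInf hXne ?_
    rintro x ⟨ρ, hρ, rfl⟩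
    exact hkey ρ hρ
  have hbdd : BddAbove { d : ℝ | ∃ q : Fin A → ℝ, IsDist q ∧
      d = sInf { x : ℝ | ∃ ρ, MemV P ρ ∧
        x = mutInfo (fun ss a => ∑ r, ρ r ss a) q } } := by
    refine ⟨(Fintype.card (Fin A) : ℝ), ?_⟩
    rintro d ⟨q', hq', rfl⟩
    by_cases hbb : BddBelow { x : ℝ | ∃ ρ, MemV P ρ ∧
        x = mutInfo (fun ss a => ∑ r, ρ r ss a) q' }
    · refine le_trans (csInf_le hbb ⟨ρ₀, hρ₀, rfl⟩) ?_
      exact mutInfo_le_card _ _ hq'.1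
        (fun ss a => Finset.sum_nonneg fun r _ => hρ₀.1 r ss a)
        (fun a => by rw [Finset.sum_comm]; exact hρ₀.2.1 a)
    · rw [Real.sInf_of_not_bddBelow hbb]
      positivity
  have hmem : sInf { x : ℝ | ∃ ρ, MemV P ρ ∧
        x = mutInfo (fun ss a => ∑ r, ρ r ss a) (fun a : Fin A => η a / γ) }
      ∈ { d : ℝ | ∃ q : Fin A → ℝ, IsDist q ∧
        d = sInf { x : ℝ | ∃ ρ, MemV P ρ ∧
          x = mutInfo (fun ss a => ∑ r, ρ r ss a) q } } :=
    ⟨fun a => η a / γ, hq_dist, rfl⟩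
  exact le_trans h2 (le_csSup hbdd hmem)
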